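/- arXiv:1706.00350 — 9 statements merged into one kernel-verified Lean document; each statement's English description precedes it below -/
import Mathlib

section
/- Let N ≥ 2, 1 ≤ M < N, and D ≥ 1 be integers. For every τ ∈ (0,1) with τ < 1-((N-1)/(N-1+D))^{1/D}, the derivative satisfies P_D'(τ) > 0; moreover P_D'(τ) < 0 for all τ sufficiently close to 1 (i.e., the limit of P_D'(τ) as τ → 1⁻ is negative or −∞, and in particular there exists τ₀ ∈ (0,1) such that P_D'(τ) < 0 for all τ ∈ (τ₀,1)). -/
set_option maxHeartbeats 1000000


open Finset Set

noncomputable def P (N M D : ℕ) (τ : ℝ) : ℝ :=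
  (1 - (1 - τ)^D) * ∑ i ∈ range M, ((N-1).choose i : ℝ) * τ^i * (1-τ)^(N-1-i)

/-- `(k+1) * C(n+1,k+1) = (n+1) * C(n,k)` -/
lemma natA (n k : ℕ) : (k+1) * (n+1).choose (k+1) = (n+1) * n.choose k := by
  rw [mul_comm]; exact (Nat.add_one_mul_choose_eq n k).symm

/-- `(n+1-k) * C(n+1,k) = (n+1) * C(n,k)` -/
lemma natB (n k : ℕ) : (n + 1 - k) * (n+1).choose k = (n+1) * n.choose k := by
  cases k with
  | zero => simp
  | succ j =>
    have h1 := Nat.choose_succ_right_eq (n+1) (j+1)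
    have h2 := Nat.add_one_mul_choose_eq n (j+1)
    calc (n + 1 - (j+1)) * (n+1).choose (j+1)
        = (n+1).choose (j+1) * (n + 1 - (j+1)) := by ring
      _ = (n+1).choose (j+1+1) * (j+1+1) := h1.symm
      _ = (n+1) * n.choose (j+1) := by rw [← h2]

lemma hasDerivAt_S (N M : ℕ) (hN : 2 ≤ N) (hM : 1 ≤ M) (τ : ℝ) :
    HasDerivAt (fun t : ℝ => ∑ i ∈ range M, ((N-1).choose i : ℝ) * t^i * (1-t)^(N-1-i))
      (-(((N-1 : ℕ) : ℝ) * (((N-2).choose (M-1) : ℕ) : ℝ) * τ^(M-1) * (1-τ)^(N-1-M))) τ := by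
  set H : ℕ → ℝ := fun i => Nat.casesOn i 0
    (fun j => ((N-1 : ℕ) : ℝ) * (((N-2).choose j : ℕ) : ℝ) * τ^j * (1-τ)^(N-2-j)) with hH
  have H0 : H 0 = 0 := rfl
  have Hsucc : ∀ j, H (j+1) = ((N-1 : ℕ) : ℝ) * (((N-2).choose j : ℕ) : ℝ) * τ^j * (1-τ)^(N-2-j) :=
    fun j => rfl
  have hterm : ∀ i : ℕ, HasDerivAt (fun t : ℝ => ((N-1).choose i : ℝ) * t^i * (1-t)^(N-1-i))
      (((N-1).choose i : ℝ) * ((i : ℝ) * τ^(i-1)) * (1-τ)^(N-1-i)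
        + ((N-1).choose i : ℝ) * τ^i * (((N-1-i : ℕ) : ℝ) * (1-τ)^(N-1-i-1) * (0-1))) τ := by
    intro i
    have h0 : HasDerivAt (fun t : ℝ => 1 - t) (0-1) τ :=
      (hasDerivAt_const τ (1:ℝ)).sub (hasDerivAt_id τ)
    have h2 : HasDerivAt (fun t : ℝ => (1-t)^(N-1-i))
        (((N-1-i : ℕ) : ℝ) * (1-τ)^(N-1-i-1) * (0-1)) τ :=
      (hasDerivAt_pow (N-1-i) (1-τ)).comp τ h0
    exact ((hasDerivAt_pow i τ).const_mul (((N-1).choose i : ℝ))).mul h2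
  have hsum := HasDerivAt.fun_sum (fun i _ => hterm i) (u := range M)
  have key : (∑ i ∈ range M, (((N-1).choose i : ℝ) * ((i : ℝ) * τ^(i-1)) * (1-τ)^(N-1-i)
        + ((N-1).choose i : ℝ) * τ^i * (((N-1-i : ℕ) : ℝ) * (1-τ)^(N-1-i-1) * (0-1))))
      = -(((N-1 : ℕ) : ℝ) * (((N-2).choose (M-1) : ℕ) : ℝ) * τ^(M-1) * (1-τ)^(N-1-M)) := by
    have hstep : ∀ i : ℕ, (((N-1).choose i : ℝ) * ((i : ℝ) * τ^(i-1)) * (1-τ)^(N-1-i)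
        + ((N-1).choose i : ℝ) * τ^i * (((N-1-i : ℕ) : ℝ) * (1-τ)^(N-1-i-1) * (0-1)))
        = H i - H (i+1) := by
      intro i
      cases i with
      | zero =>
        rw [H0, Hsucc 0]
        rw [show N-1-0-1 = N-2-0 from by omega, show N-1-0 = N-1 from by omega,
          Nat.choose_zero_right, Nat.choose_zero_right]
        push_cast
        ring
      | succ j =>
        have e1 : (j+1) * (N-1).choose (j+1) = (N-1) * (N-2).choose j := by
          have := natA (N-2) j
          rwa [show N-2+1 = N-1 from by omega] at this
        have e2 : (N-1-(j+1)) * (N-1).choose (j+1) = (N-1) * (N-2).choose (j+1) := by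
          have := natB (N-2) (j+1)
          rwa [show N-2+1 = N-1 from by omega] at this
        have E1 : ((j:ℝ)+1) * ((N-1).choose (j+1) : ℝ)
            = ((N-1 : ℕ) : ℝ) * ((N-2).choose j : ℝ) := by exact_mod_cast e1
        have E2 : ((N-1-(j+1) : ℕ) : ℝ) * ((N-1).choose (j+1) : ℝ)
            = ((N-1 : ℕ) : ℝ) * ((N-2).choose (j+1) : ℝ) := by exact_mod_cast e2
        rw [Hsucc j, Hsucc (j+1)]
        rw [show N-1-(j+1)-1 = N-2-(j+1) from by omega]
        rw [show N-1-(j+1) = N-2-j from by omega] at E2 ⊢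
        push_cast at E1 E2 ⊢
        linear_combination τ^j * (1-τ)^(N-2-j) * E1 - τ^(j+1) * (1-τ)^(N-2-(j+1)) * E2
    rw [Finset.sum_congr rfl (fun i _ => hstep i), Finset.sum_range_sub' H]
    obtain ⟨m, rfl⟩ : ∃ m, M = m + 1 := ⟨M - 1, by omega⟩
    rw [H0, Hsucc m]
    rw [show m+1-1 = m from rfl, show N-2-m = N-1-(m+1) from by omega]
    ring
  rw [← key]
  exact hsum

lemma deriv_P (N M D : ℕ) (hN : 2 ≤ N) (hM : 1 ≤ M) (hD : 1 ≤ D) (τ : ℝ) :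
    deriv (P N M D) τ
      = (D : ℝ) * (1-τ)^(D-1) * (∑ i ∈ range M, ((N-1).choose i : ℝ) * τ^i * (1-τ)^(N-1-i))
        - (1 - (1-τ)^D) * (((N-1 : ℕ) : ℝ) * (((N-2).choose (M-1) : ℕ) : ℝ)
            * τ^(M-1) * (1-τ)^(N-1-M)) := by
  have hS := hasDerivAt_S N M hN hM τ
  have h0 : HasDerivAt (fun t : ℝ => 1 - t) (0-1) τ :=
    (hasDerivAt_const τ (1:ℝ)).sub (hasDerivAt_id τ)
  have h2 : HasDerivAt (fun t : ℝ => (1-t)^D) ((D : ℝ) * (1-τ)^(D-1) * (0-1)) τ :=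
    (hasDerivAt_pow D (1-τ)).comp τ h0
  have hf : HasDerivAt (fun t : ℝ => 1 - (1-t)^D) ((D : ℝ) * (1-τ)^(D-1)) τ := by
    have h3 := (hasDerivAt_const τ (1:ℝ)).fun_sub h2
    exact h3.congr_deriv (by ring)
  have hP : HasDerivAt (P N M D)
      ((D : ℝ) * (1-τ)^(D-1) * (∑ i ∈ range M, ((N-1).choose i : ℝ) * τ^i * (1-τ)^(N-1-i))
        + (1 - (1-τ)^D) * (-(((N-1 : ℕ) : ℝ) * (((N-2).choose (M-1) : ℕ) : ℝ)
            * τ^(M-1) * (1-τ)^(N-1-M)))) τ := hf.mul hS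
  rw [hP.deriv]; ring

theorem stmt2 (N M D : ℕ) (hN : 2 ≤ N) (hM : 1 ≤ M) (hMN : M < N) (hD : 1 ≤ D) :
    (∀ τ ∈ Ioo (0:ℝ) 1,
        τ < 1 - (((N:ℝ)-1)/((N:ℝ)-1+(D:ℝ))) ^ ((1:ℝ)/(D:ℝ)) →
        0 < deriv (P N M D) τ) ∧
    ∃ τ₀ ∈ Ioo (0:ℝ) 1, ∀ τ ∈ Ioo τ₀ 1, deriv (P N M D) τ < 0 := by
  have hN1 : (1:ℝ) ≤ (N:ℝ) - 1 := by
    have : (2:ℝ) ≤ (N:ℝ) := by exact_mod_cast hN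
    linarith
  have hD0 : (0:ℝ) < (D:ℝ) := by exact_mod_cast hD
  have hNcast : ((N-1 : ℕ) : ℝ) = (N:ℝ) - 1 := by
    have : (1:ℕ) ≤ N := by omega
    push_cast [this]; ring
  have hc2pos : 0 < (((N-2).choose (M-1) : ℕ) : ℝ) := by
    have : M - 1 ≤ N - 2 := by omega
    exact_mod_cast Nat.choose_pos this
  constructor
  · rintro τ ⟨hτ0, hτ1⟩ hcond
    rw [deriv_P N M D hN hM hD τ]
    set r : ℝ := ((N:ℝ)-1)/((N:ℝ)-1+(D:ℝ)) with hr
    have hden : (0:ℝ) < (N:ℝ) - 1 + (D:ℝ) := by linarith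
    have hr0 : 0 < r := div_pos (by linarith) hden
    have hrpow : (r ^ ((1:ℝ)/(D:ℝ))) ^ D = r := by
      rw [← Real.rpow_natCast (r ^ ((1:ℝ)/(D:ℝ))) D, ← Real.rpow_mul hr0.le,
        one_div_mul_cancel (ne_of_gt hD0), Real.rpow_one]
    have hx : r < (1-τ)^D := by
      calc r = (r ^ ((1:ℝ)/(D:ℝ))) ^ D := hrpow.symm
        _ < (1-τ)^D := by
            apply pow_lt_pow_left₀ _ (Real.rpow_nonneg hr0.le _) (by omega)
            linarith
    set x := (1-τ)^D with hxdef
    have hkey : ((N:ℝ)-1) * (1-x) < (D:ℝ) * x := by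
      rw [hr, div_lt_iff₀ hden] at hx
      nlinarith
    -- lower bound the sum by its (M-1)-th term
    have hmem : M - 1 ∈ range M := by simp; omega
    have hterm_nonneg : ∀ i ∈ range M, 0 ≤ ((N-1).choose i : ℝ) * τ^i * (1-τ)^(N-1-i) := by
      intro i _
      exact mul_nonneg (mul_nonneg (by positivity) (pow_nonneg hτ0.le _))
        (pow_nonneg (by linarith) _)
    have hSlb : ((N-1).choose (M-1) : ℝ) * τ^(M-1) * (1-τ)^(N-1-(M-1))
        ≤ ∑ i ∈ range M, ((N-1).choose i : ℝ) * τ^i * (1-τ)^(N-1-i) :=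
      Finset.single_le_sum hterm_nonneg hmem
    have hexp1 : (1-τ)^(N-1-(M-1)) = (1-τ)^(N-1-M) * (1-τ) := by
      rw [← pow_succ]; congr 1; omega
    have hexp2 : x = (1-τ)^(D-1) * (1-τ) := by
      rw [hxdef, ← pow_succ]; congr 1; omega
    have hc12 : (((N-2).choose (M-1) : ℕ) : ℝ) ≤ (((N-1).choose (M-1) : ℕ) : ℝ) := by
      exact_mod_cast Nat.choose_le_choose (M-1) (by omega : N - 2 ≤ N - 1)
    have ht : (0:ℝ) < τ^(M-1) := pow_pos hτ0 _
    have hb : (0:ℝ) < (1-τ)^(N-1-M) := pow_pos (by linarith) _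
    have ha : (0:ℝ) < (1-τ)^(D-1) := pow_pos (by linarith) _
    have hx0 : 0 < x := pow_pos (by linarith) _
    have hstep : (D:ℝ) * (1-τ)^(D-1)
          * (((N-1).choose (M-1) : ℝ) * τ^(M-1) * ((1-τ)^(N-1-M) * (1-τ)))
        ≤ (D:ℝ) * (1-τ)^(D-1)
          * (∑ i ∈ range M, ((N-1).choose i : ℝ) * τ^i * (1-τ)^(N-1-i)) := by
      apply mul_le_mul_of_nonneg_left _ (by positivity)
      rw [← hexp1]; exact hSlb
    rw [hNcast]
    have hfinal : 0 < (D:ℝ) * (1-τ)^(D-1)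
        * (((N-1).choose (M-1) : ℝ) * τ^(M-1) * ((1-τ)^(N-1-M) * (1-τ)))
        - (1 - x) * (((N:ℝ)-1) * (((N-2).choose (M-1) : ℕ) : ℝ) * τ^(M-1) * (1-τ)^(N-1-M)) := by
      have h1 : (D:ℝ) * (1-τ)^(D-1) * (1-τ) = (D:ℝ) * x := by rw [hexp2]; ring
      have e : (D:ℝ) * (1-τ)^(D-1)
            * (((N-1).choose (M-1) : ℝ) * τ^(M-1) * ((1-τ)^(N-1-M) * (1-τ)))
          = ((D:ℝ) * x) * ((N-1).choose (M-1) : ℝ) * (τ^(M-1) * (1-τ)^(N-1-M)) := by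
        rw [← h1]; ring
      rw [e]
      have htb : 0 < τ^(M-1) * (1-τ)^(N-1-M) := mul_pos ht hb
      have hc1' : (((N-2).choose (M-1) : ℕ) : ℝ) ≤ ((N-1).choose (M-1) : ℝ) := hc12
      have hA : (((N:ℝ)-1)*(1-x)) * ((((N-2).choose (M-1) : ℕ) : ℝ) * (τ^(M-1)*(1-τ)^(N-1-M)))
          < ((D:ℝ)*x) * ((((N-2).choose (M-1) : ℕ) : ℝ) * (τ^(M-1)*(1-τ)^(N-1-M))) :=
        mul_lt_mul_of_pos_right hkey (mul_pos hc2pos htb)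
      have hB : ((D:ℝ)*x) * ((((N-2).choose (M-1) : ℕ) : ℝ) * (τ^(M-1)*(1-τ)^(N-1-M)))
          ≤ ((D:ℝ)*x) * (((N-1).choose (M-1) : ℝ) * (τ^(M-1)*(1-τ)^(N-1-M))) :=
        mul_le_mul_of_nonneg_left (mul_le_mul_of_nonneg_right hc1' htb.le)
          (le_of_lt (mul_pos hD0 hx0))
      nlinarith [hA, hB]
    linarith [hstep, hfinal]
  · -- part 2
    set K : ℝ := ((N:ℝ)-1) * (((N-2).choose (M-1) : ℕ) : ℝ) with hK
    have hKpos : 0 < K := mul_pos (by linarith) hc2pos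
    set B : ℝ := ∑ i ∈ range M, (((N-1).choose i : ℕ) : ℝ) with hB
    have hBpos : 0 < B := by
      rw [hB]
      apply Finset.sum_pos
      · intro i hi
        exact_mod_cast Nat.choose_pos (by
          simp only [Finset.mem_range] at hi; omega : i ≤ N - 1)
      · exact ⟨0, by simp; omega⟩
    set c : ℝ := K / (2^(N+1) * (D:ℝ) * B) with hc
    have hcpos : 0 < c := by
      apply div_pos hKpos
      positivity
    set δ : ℝ := min (1/2) c with hδ
    have hδpos : 0 < δ := lt_min (by norm_num) hcpos
    have hδle : δ ≤ 1/2 := min_le_left _ _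
    refine ⟨1 - δ/2, ⟨by linarith, by linarith⟩, ?_⟩
    rintro τ ⟨hτ0, hτ1⟩
    have hτhalf : (1:ℝ)/2 ≤ τ := by linarith
    have h1τ : 1 - τ < δ/2 := by linarith
    have h1τ0 : 0 < 1 - τ := by linarith
    rw [deriv_P N M D hN hM hD τ, hNcast]
    set x := (1-τ)^D with hxdef
    have hb : (0:ℝ) < (1-τ)^(N-1-M) := pow_pos h1τ0 _
    have hx_le : x ≤ 1 - τ := by
      rw [hxdef]
      exact pow_le_of_le_one h1τ0.le (by linarith) (by omega)
    have hx0 : 0 < x := pow_pos h1τ0 _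
    -- upper bound on the sum
    have hSub : (∑ i ∈ range M, ((N-1).choose i : ℝ) * τ^i * (1-τ)^(N-1-i))
        ≤ B * (1-τ)^(N-M) := by
      rw [hB, Finset.sum_mul]
      apply Finset.sum_le_sum
      intro i hi
      simp only [Finset.mem_range] at hi
      have hτle1 : τ ≤ 1 := by linarith
      have h1 : τ^i ≤ 1 := pow_le_one₀ (by linarith) hτle1
      have h2 : (1-τ)^(N-1-i) ≤ (1-τ)^(N-M) :=
        pow_le_pow_of_le_one h1τ0.le (by linarith) (by omega)
      calc ((N-1).choose i : ℝ) * τ^i * (1-τ)^(N-1-i)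
          ≤ ((N-1).choose i : ℝ) * 1 * (1-τ)^(N-M) := by
            apply mul_le_mul _ h2 (by positivity) (by positivity)
            apply mul_le_mul_of_nonneg_left h1 (by positivity)
        _ = ((N-1).choose i : ℝ) * (1-τ)^(N-M) := by ring
    have hexp3 : (1-τ)^(N-M) = (1-τ)^(N-1-M) * (1-τ) := by
      rw [← pow_succ]; congr 1; omega
    have hexp4 : (1-τ)^(D-1) * (1-τ) = x := by
      rw [hxdef, ← pow_succ]; congr 1; omega
    have ha : (0:ℝ) ≤ (1-τ)^(D-1) := pow_nonneg h1τ0.le _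
    -- step 1 : D (1-τ)^{D-1} S ≤ D B x b
    have step1 : (D:ℝ) * (1-τ)^(D-1)
          * (∑ i ∈ range M, ((N-1).choose i : ℝ) * τ^i * (1-τ)^(N-1-i))
        ≤ (D:ℝ) * B * x * (1-τ)^(N-1-M) := by
      have h := mul_le_mul_of_nonneg_left hSub (a := (D:ℝ) * (1-τ)^(D-1)) (by positivity)
      calc (D:ℝ) * (1-τ)^(D-1) * (∑ i ∈ range M, ((N-1).choose i : ℝ) * τ^i * (1-τ)^(N-1-i))
          ≤ (D:ℝ) * (1-τ)^(D-1) * (B * (1-τ)^(N-M)) := h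
        _ = (D:ℝ) * B * ((1-τ)^(D-1) * (1-τ)) * (1-τ)^(N-1-M) := by
            rw [hexp3]; ring
        _ = (D:ℝ) * B * x * (1-τ)^(N-1-M) := by rw [hexp4]
    -- step 2 : D B x < K / 2^(N+1)
    have hDBc : (D:ℝ) * B * c = K / 2^(N+1) := by
      rw [hc]; field_simp
    have step2 : (D:ℝ) * B * x < K / 2^(N+1) := by
      have h1 : x < δ := by linarith
      have h2 : δ ≤ c := min_le_right _ _
      calc (D:ℝ) * B * x < (D:ℝ) * B * c := by
            apply mul_lt_mul_of_pos_left _ (by positivity)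
            linarith
        _ = K / 2^(N+1) := hDBc
    -- step 3 : K / 2^(N+1) ≤ (1-x) K τ^(M-1)
    have step3 : K / 2^(N+1) ≤ (1 - x) * K * τ^(M-1) := by
      have h1x : (1:ℝ)/2 ≤ 1 - x := by linarith
      have ht1 : ((1:ℝ)/2)^(M-1) ≤ τ^(M-1) := pow_le_pow_left₀ (by norm_num) hτhalf _
      have ht2 : ((1:ℝ)/2)^N ≤ ((1:ℝ)/2)^(M-1) :=
        pow_le_pow_of_le_one (by norm_num) (by norm_num) (by omega)
      have ht : ((1:ℝ)/2)^N ≤ τ^(M-1) := le_trans ht2 ht1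
      have hτM : (0:ℝ) ≤ τ^(M-1) := by positivity
      have heq : K / 2^(N+1) = ((1:ℝ)/2) * (K * ((1/2)^N)) := by
        rw [div_pow, one_pow, pow_succ]
        ring
      rw [heq]
      calc ((1:ℝ)/2) * (K * ((1/2)^N)) ≤ (1-x) * (K * τ^(M-1)) := by
            apply mul_le_mul h1x _ (by positivity) (by linarith)
            exact mul_le_mul_of_nonneg_left ht hKpos.le
        _ = (1-x) * K * τ^(M-1) := by ring
    have hchain : (D:ℝ) * B * x * (1-τ)^(N-1-M)
        < (1-x) * K * τ^(M-1) * (1-τ)^(N-1-M) := by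
      apply mul_lt_mul_of_pos_right _ hb
      linarith
    have : (1 - x) * (((N:ℝ)-1) * (((N-2).choose (M-1) : ℕ) : ℝ) * τ^(M-1) * (1-τ)^(N-1-M))
        = (1-x) * K * τ^(M-1) * (1-τ)^(N-1-M) := by rw [hK]; ring
    rw [this]
    linarith [step1, hchain]
end

section
/- Let N and M be integers with 2 ≤ M < N. For every τ ∈ (0,1), the derivative of H_1 satisfies H_1'(τ) < N-1. -/
open Finset Set

noncomputable def f1 (N M : ℕ) (τ : ℝ) : ℝ :=
  ∑ i ∈ range M, ((N-1).choose i : ℝ) * τ^i * (1-τ)^(N-1-i)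

noncomputable def f2 (N M : ℕ) (τ : ℝ) : ℝ :=
  ∑ i ∈ range M, (i : ℝ) * ((N-1).choose i : ℝ) * τ^i * (1-τ)^(N-1-i)

noncomputable def H1 (N M : ℕ) (τ : ℝ) : ℝ := f2 N M τ / f1 N M τ

lemma sum_d (N M : ℕ) (hM : 1 ≤ M) (hMN : M < N) (τ : ℝ) :
    ∑ i ∈ range M, (((N-1).choose i : ℝ) * ((i:ℝ) * τ^(i-1)) * (1-τ)^(N-1-i)
      + ((N-1).choose i : ℝ) * τ^i * (((N-1-i : ℕ):ℝ) * (1-τ)^(N-1-i-1) * (-1)))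
    = -(((N-1:ℕ):ℝ) * ((N-2).choose (M-1) : ℝ) * τ^(M-1) * (1-τ)^(N-1-M)) := by
  revert hMN
  induction M, hM using Nat.le_induction with
  | base =>
    intro h
    simp only [Finset.sum_range_one]
    norm_num
  | succ M hM1 ih =>
    intro h
    have hMN' : M < N := by omega
    rw [Finset.sum_range_succ, ih hMN']
    have e1 : M + 1 - 1 = M := by omega
    have e2 : N - 1 - M - 1 = N - 1 - (M+1) := by omega
    have e3 : N - 1 - M = (N - 1 - (M+1)) + 1 := by omega
    have e4 : M = (M-1) + 1 := by omega
    have h1 : ((N-1).choose M : ℝ) * (M:ℝ) = ((N-1:ℕ):ℝ) * ((N-2).choose (M-1) : ℝ) := by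
      have := Nat.add_one_mul_choose_eq (N-2) (M-1)
      have hn : N-2+1 = N-1 := by omega
      have hm : M-1+1 = M := by omega
      rw [hn, hm] at this
      exact_mod_cast congrArg (Nat.cast : ℕ → ℝ) this.symm
    have h2 : ((N-1).choose M : ℝ) * ((N-1-M : ℕ):ℝ) = ((N-1:ℕ):ℝ) * ((N-2).choose M : ℝ) := by
      have ha := Nat.choose_succ_right_eq (N-1) M
      have hb := Nat.add_one_mul_choose_eq (N-2) M
      have hn : N-2+1 = N-1 := by omega
      rw [hn] at hb
      have : (N-1).choose M * (N-1-M) = (N-1) * ((N-2).choose M) := by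
        rw [← ha, ← hb]
      exact_mod_cast congrArg (Nat.cast : ℕ → ℝ) this
    have e5 : τ^M = τ^(M-1) * τ := by
      conv_lhs => rw [e4]
      rw [pow_succ]
    rw [e1, e2, e5, e3, pow_succ] at *
    linear_combination (τ^(M-1) * (1-τ)^(N-1-(M+1)) * (1-τ)) * h1
      - (τ^(M-1) * τ * (1-τ)^(N-1-(M+1))) * h2

lemma hasDerivAt_f1 (N M : ℕ) (hM : 1 ≤ M) (hMN : M < N) (τ : ℝ) :
    HasDerivAt (f1 N M)
      (-(((N-1:ℕ):ℝ) * ((N-2).choose (M-1) : ℝ) * τ^(M-1) * (1-τ)^(N-1-M))) τ := by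
  rw [← sum_d N M hM hMN τ]
  apply HasDerivAt.fun_sum
  intro i _
  have hc : HasDerivAt (fun x : ℝ => ((N-1).choose i : ℝ) * x^i)
      (((N-1).choose i : ℝ) * ((i:ℝ) * τ^(i-1))) τ := (hasDerivAt_pow i τ).const_mul _
  have hd : HasDerivAt (fun x : ℝ => (1-x)^(N-1-i))
      (((N-1-i : ℕ):ℝ) * (1-τ)^(N-1-i-1) * (-1)) τ := by
    exact ((hasDerivAt_id τ).const_sub 1).pow _
  exact hc.mul hd

lemma f2_eq (N M : ℕ) (hM : 1 ≤ M) (hN : 2 ≤ N) (τ : ℝ) :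
    f2 N M τ = ((N-1:ℕ):ℝ) * τ * f1 (N-1) (M-1) τ := by
  unfold f1 f2
  have hM' : M = (M-1) + 1 := by omega
  rw [hM', Finset.sum_range_succ']
  simp only [Nat.cast_zero, zero_mul, add_zero]
  rw [Finset.mul_sum]
  apply Finset.sum_congr rfl
  intro i _
  have h1 : ((i:ℝ)+1) * ((N-1).choose (i+1) : ℝ) = ((N-1:ℕ):ℝ) * ((N-1-1).choose i : ℝ) := by
    have := Nat.add_one_mul_choose_eq (N-2) i
    have hn : N-2+1 = N-1 := by omega
    rw [hn] at this
    have e : N - 1 - 1 = N - 2 := by omega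
    rw [e]
    have := congrArg (Nat.cast : ℕ → ℝ) this
    push_cast at this ⊢
    linarith
  have e2 : N - 1 - (i+1) = N - 1 - 1 - i := by omega
  rw [e2]
  push_cast
  rw [pow_succ]
  linear_combination (τ^i * τ * (1-τ)^(N-1-1-i)) * h1

lemma f1_split (N M : ℕ) (hM : 1 ≤ M) (hMN : M < N) (τ : ℝ) :
    f1 N M τ = f1 (N-1) (M-1) τ + ((N-2).choose (M-1) : ℝ) * τ^(M-1) * (1-τ)^(N-M) := by
  revert hMN
  induction M, hM using Nat.le_induction with
  | base =>
    intro h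
    unfold f1
    simp only [Finset.sum_range_one, Finset.sum_range_zero]
    have e : N - 1 - 0 = N - 1 := by omega
    norm_num
  | succ M hM1 ih =>
    intro h
    have hMN' : M < N := by omega
    unfold f1 at *
    rw [show N - 1 - 1 = N - 2 from by omega] at ih ⊢
    rw [Finset.sum_range_succ, ih hMN']
    have hM' : M = (M-1) + 1 := by omega
    rw [show M + 1 - 1 = (M-1) + 1 from by omega, Finset.sum_range_succ]
    have e1 : M - 1 + 1 = M := by omega
    rw [e1]
    have e2 : N - 2 - (M-1) = N - 1 - M := by omega
    have e3 : N - M = (N - 1 - M) + 1 := by omega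
    have e4 : N - (M+1) = N - 1 - M := by omega
    have hp : ((N-1).choose M : ℝ) = ((N-2).choose (M-1) : ℝ) + ((N-2).choose M : ℝ) := by
      have : (N-1).choose M = (N-2).choose (M-1) + (N-2).choose M := by
        have := Nat.choose_succ_succ (N-2) (M-1)
        simpa [Nat.succ_eq_add_one, show N-2+1 = N-1 from by omega,
          show M-1+1 = M from by omega] using this
      exact_mod_cast congrArg (Nat.cast : ℕ → ℝ) this
    have e5 : τ^M = τ^(M-1) * τ := by
      conv_lhs => rw [hM']
      rw [pow_succ]
    rw [e2, e3, e4, e5, pow_succ]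
    linear_combination (τ^(M-1) * τ * (1-τ)^(N-1-M)) * hp

lemma f1_pos (N M : ℕ) (hM : 1 ≤ M) {τ : ℝ} (h0 : 0 < τ) (h1 : τ < 1) :
    0 < f1 N M τ := by
  unfold f1
  apply Finset.sum_pos'
  · intro i _
    have : (0:ℝ) ≤ 1 - τ := by linarith
    positivity
  · refine ⟨0, Finset.mem_range.mpr (by omega), ?_⟩
    have : (0:ℝ) < 1 - τ := by linarith
    simp only [Nat.choose_zero_right, pow_zero, Nat.cast_one, one_mul, mul_one, Nat.sub_zero]
    positivity

lemma KI (N M : ℕ) (hM : 2 ≤ M) (hMN : M < N) {τ : ℝ} (h0 : 0 < τ) (h1 : τ < 1) :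
    f1 (N-1) (M-1) τ * (((N-2:ℕ):ℝ) * τ - ((M-2:ℕ):ℝ))
      ≤ ((M-1:ℕ):ℝ) * (1-τ) * (((N-2).choose (M-1) : ℝ) * τ^(M-1) * (1-τ)^(N-1-M)) := by
  have ht : (0:ℝ) < 1 - τ := by linarith
  set u : ℕ → ℝ := fun j => ((N-2).choose j : ℝ) * τ^j * (1-τ)^(N-2-j) with hu
  set T : ℕ → ℝ := fun j => (1-τ) * (j:ℝ) * u j with hT
  have hf : f1 (N-1) (M-1) τ = ∑ j ∈ range (M-1), u j := by
    unfold f1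
    apply Finset.sum_congr rfl
    intro j _
    rw [show N - 1 - 1 = N - 2 from by omega]
  have key : ∀ j ∈ range (M-1), u j * (((N-2:ℕ):ℝ) * τ - ((M-2:ℕ):ℝ)) ≤ T (j+1) - T j := by
    intro j hj
    rw [Finset.mem_range] at hj
    have hj2 : j ≤ M - 2 := by omega
    have hid : T (j+1) - T j = u j * (((N-2:ℕ):ℝ) * τ - (j:ℝ)) := by
      have hc : ((j:ℝ)+1) * ((N-2).choose (j+1) : ℝ)
          = (((N-2-j:ℕ)):ℝ) * ((N-2).choose j : ℝ) := by
        have h := congrArg (Nat.cast : ℕ → ℝ) (Nat.choose_succ_right_eq (N-2) j)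
        push_cast at h
        linarith
      have e3 : ((N-2-j : ℕ):ℝ) = ((N-2:ℕ):ℝ) - (j:ℝ) := by
        have h := congrArg (Nat.cast : ℕ → ℝ) (show N - 2 - j + j = N - 2 from by omega)
        push_cast at h
        linarith
      rw [e3] at hc
      have e2 : N - 2 - j = (N - 2 - (j+1)) + 1 := by omega
      simp only [hT, hu]
      rw [e2, pow_succ, pow_succ]
      push_cast
      linear_combination ((1-τ) * τ^j * (1-τ)^(N-2-(j+1)) * τ) * hc
    rw [hid]
    have hun : 0 ≤ u j := by
      simp only [hu]; positivity
    apply mul_le_mul_of_nonneg_left _ hun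
    have : (j:ℝ) ≤ ((M-2:ℕ):ℝ) := by exact_mod_cast hj2
    linarith
  calc f1 (N-1) (M-1) τ * (((N-2:ℕ):ℝ) * τ - ((M-2:ℕ):ℝ))
      = ∑ j ∈ range (M-1), u j * (((N-2:ℕ):ℝ) * τ - ((M-2:ℕ):ℝ)) := by
        rw [hf, Finset.sum_mul]
    _ ≤ ∑ j ∈ range (M-1), (T (j+1) - T j) := Finset.sum_le_sum key
    _ = T (M-1) - T 0 := Finset.sum_range_sub T (M-1)
    _ = ((M-1:ℕ):ℝ) * (1-τ) * (((N-2).choose (M-1) : ℝ) * τ^(M-1) * (1-τ)^(N-1-M)) := by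
        simp only [hT, hu]
        rw [show N - 2 - (M-1) = N - 1 - M from by omega]
        push_cast
        ring

lemma final_ineq (ν m τ g b : ℝ) (h0 : 0 < τ) (h1 : τ < 1) (hg : 0 < g) (hb : 0 < b)
    (hKI : g * ((ν-2)*τ - (m-2)) ≤ (m-1)*(1-τ)*b) :
    (g - (m-1)*b) * (g + (1-τ)*b) + ((ν-1)*τ)*g*b < (g + (1-τ)*b)^2 := by
  nlinarith [mul_le_mul_of_nonneg_left hKI hb.le,
    mul_pos (mul_pos hg hb) (show (0:ℝ) < 1-τ by linarith),
    mul_pos (mul_pos hb hb) (mul_pos (show (0:ℝ) < 1-τ by linarith)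
      (show (0:ℝ) < 1-τ by linarith))]

theorem stmt5 (N M : ℕ) (hM : 2 ≤ M) (hMN : M < N) :
    ∀ τ ∈ Ioo (0:ℝ) 1, deriv (H1 N M) τ < (N:ℝ) - 1 := by
  intro τ hτ
  obtain ⟨h0, h1⟩ := hτ
  have h1t : (0:ℝ) < 1 - τ := by linarith
  have cN1 : ((N-1:ℕ):ℝ) = (N:ℝ) - 1 := by rw [Nat.cast_sub (by omega)]; norm_num
  have cN2 : ((N-2:ℕ):ℝ) = (N:ℝ) - 2 := by rw [Nat.cast_sub (by omega)]; norm_num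
  have cM1 : ((M-1:ℕ):ℝ) = (M:ℝ) - 1 := by rw [Nat.cast_sub (by omega)]; norm_num
  have cM2 : ((M-2:ℕ):ℝ) = (M:ℝ) - 2 := by rw [Nat.cast_sub (by omega)]; norm_num
  have hMr : (2:ℝ) ≤ (M:ℝ) := by exact_mod_cast hM
  have hNr : (M:ℝ) + 1 ≤ (N:ℝ) := by exact_mod_cast hMN
  set g : ℝ := f1 (N-1) (M-1) τ with hgdef
  set b : ℝ := ((N-2).choose (M-1) : ℝ) * τ^(M-1) * (1-τ)^(N-1-M) with hbdef
  have hgpos : 0 < g := f1_pos (N-1) (M-1) (by omega) h0 h1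
  have hbpos : 0 < b := by
    have hch : 0 < ((N-2).choose (M-1) : ℝ) := by
      exact_mod_cast Nat.choose_pos (show M-1 ≤ N-2 by omega)
    rw [hbdef]; positivity
  have hApos : 0 < f1 N M τ := f1_pos N M (by omega) h0 h1
  have hA : f1 N M τ = g + (1-τ) * b := by
    rw [f1_split N M (by omega) hMN τ, hgdef, hbdef,
      show N - M = (N-1-M)+1 from by omega, pow_succ]
    ring
  have hf1 : HasDerivAt (f1 N M) (-(((N:ℝ)-1) * b)) τ := by
    have h := hasDerivAt_f1 N M (by omega) hMN τ
    convert h using 1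
    rw [hbdef, cN1]; ring
  have hgder : HasDerivAt (f1 (N-1) (M-1))
      (-(((N:ℝ)-2) * ((N-3).choose (M-2) : ℝ) * τ^(M-2) * (1-τ)^(N-1-M))) τ := by
    have h := hasDerivAt_f1 (N-1) (M-1) (by omega) (by omega) τ
    rw [show N-1-1 = N-2 from by omega, show N-1-2 = N-3 from by omega,
      show M-1-1 = M-2 from by omega, show N-2-(M-1) = N-1-M from by omega, cN2] at h
    exact h
  have hf2fun : f2 N M = fun x : ℝ => ((N:ℝ)-1) * x * f1 (N-1) (M-1) x := by
    funext x
    rw [f2_eq N M (by omega) (by omega) x, cN1]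
  have hf2 : HasDerivAt (f2 N M)
      (((N:ℝ)-1) * g + (((N:ℝ)-1) * τ) *
        (-(((N:ℝ)-2) * ((N-3).choose (M-2) : ℝ) * τ^(M-2) * (1-τ)^(N-1-M)))) τ := by
    rw [hf2fun]
    have h := ((hasDerivAt_id τ).const_mul ((N:ℝ)-1)).mul hgder
    exact h.congr_deriv (by simp only [id_eq]; rw [hgdef]; ring)
  have hf2τ : f2 N M τ = ((N:ℝ)-1) * τ * g := by
    rw [hf2fun]
  have hcc : ((N:ℝ)-1) * τ *
      (((N:ℝ)-2) * ((N-3).choose (M-2) : ℝ) * τ^(M-2) * (1-τ)^(N-1-M))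
      = ((N:ℝ)-1) * (((M:ℝ)-1) * b) := by
    have h := congrArg (Nat.cast : ℕ → ℝ) (Nat.add_one_mul_choose_eq (N-3) (M-2))
    rw [show N-3+1 = N-2 from by omega, show M-2+1 = M-1 from by omega] at h
    push_cast at h
    rw [cN2, cM1] at h
    have e5 : τ^(M-1) = τ^(M-2) * τ := by
      conv_lhs => rw [show M-1 = (M-2)+1 from by omega]
      rw [pow_succ]
    rw [hbdef, e5]
    linear_combination (((N:ℝ)-1) * τ^(M-2) * τ * (1-τ)^(N-1-M)) * h
  have hH : HasDerivAt (H1 N M)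
      (((((N:ℝ)-1) * g + (((N:ℝ)-1) * τ) *
        (-(((N:ℝ)-2) * ((N-3).choose (M-2) : ℝ) * τ^(M-2) * (1-τ)^(N-1-M)))) * f1 N M τ
        - f2 N M τ * (-(((N:ℝ)-1) * b))) / (f1 N M τ)^2) τ := by
    exact hf2.div hf1 (ne_of_gt hApos)
  rw [hH.deriv, div_lt_iff₀ (by positivity)]
  have hKI := KI N M hM hMN h0 h1
  rw [← hbdef, ← hgdef, cN2, cM2, cM1] at hKI
  have hbr := final_ineq (N:ℝ) (M:ℝ) τ g b h0 h1 hgpos hbpos hKI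
  have hν1 : (0:ℝ) < (N:ℝ) - 1 := by linarith
  have hmul := mul_lt_mul_of_pos_left hbr hν1
  rw [hA, hf2τ]
  nlinarith [hmul, hcc]
end

section
/- Let N and M be integers with 1 ≤ M < N, and let τ be a real number. Then Σ_{i=M}^{N-1} (i - (N-1)τ) C(N-1,i) τ^i (1-τ)^{N-1-i} = (N-M) C(N-1,M-1) τ^M (1-τ)^{N-M}. -/
open Finset

theorem stmt7 (N M : ℕ) (hM : 1 ≤ M) (hMN : M < N) (τ : ℝ) :
    ∑ i ∈ Icc M (N-1), ((i:ℝ) - ((N:ℝ)-1)*τ) * ((N-1).choose i : ℝ) * τ^i * (1-τ)^(N-1-i)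
      = ((N:ℝ)-(M:ℝ)) * ((N-1).choose (M-1) : ℝ) * τ^M * (1-τ)^(N-M) := by
  obtain ⟨n, rfl⟩ : ∃ n, N = n + 1 := ⟨N - 1, by omega⟩
  have hMn : M ≤ n := by omega
  simp only [Nat.add_sub_cancel]
  set f : ℕ → ℝ := fun i => (i : ℝ) * (n.choose i : ℝ) * τ ^ i * (1 - τ) ^ (n + 1 - i) with hf
  have step : ∀ i ∈ Icc M n,
      ((i:ℝ) - (((n+1:ℕ):ℝ)-1)*τ) * (n.choose i : ℝ) * τ^i * (1-τ)^(n-i)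
        = f i - f (i + 1) := by
    intro i hi
    simp only [mem_Icc] at hi
    have hin : i ≤ n := hi.2
    have key : ((n.choose (i+1) : ℝ)) * (i + 1) = (n.choose i : ℝ) * ((n : ℝ) - i) := by
      have := Nat.choose_succ_right_eq n i
      have h' : ((n.choose (i+1) * (i+1) : ℕ) : ℝ) = ((n.choose i * (n - i) : ℕ) : ℝ) := by
        exact_mod_cast congrArg (Nat.cast : ℕ → ℝ) this
      push_cast [Nat.cast_sub hin] at h'
      exact_mod_cast h'
    have h1 : n + 1 - i = (n - i) + 1 := by omega
    have h2 : n + 1 - (i + 1) = n - i := by omega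
    simp only [hf, h1, h2]
    have : (((i+1) : ℕ) : ℝ) * (n.choose (i+1) : ℝ) = (n.choose i : ℝ) * ((n : ℝ) - i) := by
      rw [← key]; push_cast; ring
    push_cast at this ⊢
    linear_combination (τ ^ i * τ * (1 - τ) ^ (n - i)) * this
  rw [Finset.sum_congr rfl step]
  have tel : ∑ i ∈ Icc M n, (f i - f (i + 1)) = f M - f (n + 1) := by
    rw [← Finset.Ico_add_one_right_eq_Icc, Finset.sum_Ico_eq_sum_range]
    have := Finset.sum_range_sub' (fun j => f (M + j)) (n + 1 - M)
    simp only [add_zero] at this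
    simp only [Nat.succ_eq_add_one, add_assoc] at this ⊢
    rw [this, Nat.add_sub_cancel' (by omega : M ≤ n + 1)]
  rw [tel]
  have hzero : f (n + 1) = 0 := by
    simp [hf, Nat.choose_succ_self]
  rw [hzero, sub_zero, hf]
  have key2 : ((M : ℝ)) * (n.choose M : ℝ) = (n.choose (M-1) : ℝ) * ((n : ℝ) - (M - 1)) := by
    have := Nat.choose_succ_right_eq n (M - 1)
    rw [show M - 1 + 1 = M from by omega] at this
    have h' : ((n.choose M * M : ℕ) : ℝ) = ((n.choose (M-1) * (n - (M-1)) : ℕ) : ℝ) :=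
      congrArg (Nat.cast : ℕ → ℝ) this
    push_cast [Nat.cast_sub (by omega : M - 1 ≤ n), Nat.cast_sub (by omega : 1 ≤ M)] at h'
    linarith
  have h3 : n + 1 - M = (n - M) + 1 := by omega
  simp only [h3]
  push_cast [Nat.cast_sub (by omega : 1 ≤ M)] at key2 ⊢
  have hsub : ((n + 1 : ℕ) : ℝ) - (M : ℝ) = (n : ℝ) - (M : ℝ) + 1 := by push_cast; ring
  linear_combination (τ ^ M * (1 - τ) ^ (n - M + 1)) * key2
end

section
/- Let N and M be integers with 1 ≤ M < N, and let τ ∈ (0,1). Then H_1(τ) = (N-1)τ - (N-M) C(N-1,M-1) R(τ), where R(τ) = τ^M (1-τ)^{N-M} / f_1(τ). -/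
open Finset Set

noncomputable def R (N M : ℕ) (τ : ℝ) : ℝ := τ^M * (1-τ)^(N-M) / f1 N M τ

lemma choose_cast (n i : ℕ) :
    (n.choose (i+1) : ℝ) * ((i:ℝ)+1) = (n.choose i : ℝ) * ((n:ℝ) - i) := by
  rcases le_or_gt (i+1) n with h | h
  · have h1 := Nat.choose_succ_right_eq n i
    have h2 : ((n - i : ℕ) : ℝ) = (n:ℝ) - i := by
      have hi : i ≤ n := by omega
      push_cast [hi]; ring
    have := congrArg (fun k : ℕ => (k : ℝ)) h1
    push_cast at this
    rw [h2] at this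
    linarith
  · rcases eq_or_lt_of_le (by omega : n ≤ i) with h' | h'
    · subst h'
      simp [Nat.choose_eq_zero_of_lt (by omega : n < n + 1)]
    · simp [Nat.choose_eq_zero_of_lt h', Nat.choose_eq_zero_of_lt (by omega : n < i + 1)]

lemma key (n : ℕ) (τ : ℝ) : ∀ m, m + 1 ≤ n →
    (n:ℝ) * τ * (∑ i ∈ range (m+1), (n.choose i : ℝ) * τ^i * (1-τ)^(n-i))
      - (∑ i ∈ range (m+1), (i:ℝ) * (n.choose i : ℝ) * τ^i * (1-τ)^(n-i))
    = ((n:ℝ) - m) * (n.choose m : ℝ) * τ^(m+1) * (1-τ)^(n-m) := by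
  intro m
  induction m with
  | zero => intro h; simp
  | succ m ih =>
    intro h
    have hm : m + 1 ≤ n := by omega
    have IH := ih hm
    have split1 : ∑ i ∈ range (m+1+1), (n.choose i : ℝ) * τ^i * (1-τ)^(n-i)
        = (∑ i ∈ range (m+1), (n.choose i : ℝ) * τ^i * (1-τ)^(n-i))
          + (n.choose (m+1) : ℝ) * τ^(m+1) * (1-τ)^(n-(m+1)) := sum_range_succ _ _
    have split2 : ∑ i ∈ range (m+1+1), (i:ℝ) * (n.choose i : ℝ) * τ^i * (1-τ)^(n-i)
        = (∑ i ∈ range (m+1), (i:ℝ) * (n.choose i : ℝ) * τ^i * (1-τ)^(n-i))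
          + ((m+1:ℕ):ℝ) * (n.choose (m+1) : ℝ) * τ^(m+1) * (1-τ)^(n-(m+1)) := sum_range_succ _ _
    rw [split1, split2]
    have hexp : n - m = (n - (m+1)) + 1 := by omega
    rw [hexp] at IH
    push_cast
    have hc := choose_cast n m
    linear_combination IH + ((τ-1) * τ^(m+1) * (1-τ)^(n-(m+1))) * hc

theorem stmt8 (N M : ℕ) (hM : 1 ≤ M) (hMN : M < N) :
    ∀ τ ∈ Ioo (0:ℝ) 1,
      H1 N M τ = ((N:ℝ)-1)*τ - ((N:ℝ)-(M:ℝ)) * ((N-1).choose (M-1) : ℝ) * R N M τ := by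
  intro τ hτ
  obtain ⟨hτ0, hτ1⟩ := hτ
  have hτ1' : (0:ℝ) < 1 - τ := by linarith
  -- f1 positive
  have hf1 : 0 < f1 N M τ := by
    unfold f1
    apply Finset.sum_pos'
    · intro i _
      positivity
    · refine ⟨0, Finset.mem_range.mpr (by omega), ?_⟩
      simp only [Nat.choose_zero_right, pow_zero, Nat.cast_one, mul_one, one_mul, Nat.sub_zero]
      positivity
  have hMn : (M - 1) + 1 ≤ N - 1 := by omega
  have hkey := key (N-1) τ (M-1) hMn
  have hMeq : (M - 1) + 1 = M := by omega
  rw [hMeq] at hkey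
  have hcastn : ((N - 1 : ℕ) : ℝ) = (N:ℝ) - 1 := by
    have : 1 ≤ N := by omega
    push_cast [this]; ring
  have hcastm : ((M - 1 : ℕ) : ℝ) = (M:ℝ) - 1 := by
    push_cast [hM]; ring
  have hexp2 : N - 1 - (M - 1) = N - M := by omega
  rw [hcastn, hcastm, hexp2] at hkey
  have hkey' : ((N:ℝ)-1) * τ * f1 N M τ - f2 N M τ
      = ((N:ℝ) - M) * ((N-1).choose (M-1) : ℝ) * τ^M * (1-τ)^(N-M) := by
    unfold f1 f2
    rw [hkey]; ring
  unfold H1 R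
  field_simp
  linarith [hkey']
end

section
/- Let N and M be integers with 2 ≤ M < N, and define Q(x) = x^{M-1} / (Σ_{i=0}^{M-1} C(N-1,i) x^i) for x > 0. Then Q'(x) > 0 for every x > 0. -/
open Finset Set

noncomputable def Q (N M : ℕ) (x : ℝ) : ℝ :=
  x^(M-1) / ∑ i ∈ range M, ((N-1).choose i : ℝ) * x^i

theorem stmt9 (N M : ℕ) (hM : 2 ≤ M) (hMN : M < N) :
    ∀ x : ℝ, 0 < x → 0 < deriv (Q N M) x := by
  intro x hx
  set c : ℕ → ℝ := fun i => ((N-1).choose i : ℝ) with hc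
  have hcnn : ∀ i, 0 ≤ c i := fun i => Nat.cast_nonneg _
  have hS : HasDerivAt (fun y : ℝ => ∑ i ∈ range M, c i * y ^ i)
      (∑ i ∈ range M, c i * ((i : ℝ) * x ^ (i - 1))) x := by
    apply HasDerivAt.fun_sum
    intro i _
    exact (hasDerivAt_pow i x).const_mul (c i)
  have hSpos : 0 < ∑ i ∈ range M, c i * x ^ i := by
    apply Finset.sum_pos'
    · intro i _
      exact mul_nonneg (hcnn i) (pow_nonneg hx.le i)
    · refine ⟨0, Finset.mem_range.2 (by omega), ?_⟩
      simp [hc]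
  have hf : HasDerivAt (fun y : ℝ => y ^ (M - 1))
      (((M - 1 : ℕ) : ℝ) * x ^ (M - 2)) x := by
    have := hasDerivAt_pow (M - 1) x
    simpa [show M - 1 - 1 = M - 2 by omega] using this
  have hQ : HasDerivAt (Q N M)
      ((((M - 1 : ℕ) : ℝ) * x ^ (M - 2) * ∑ i ∈ range M, c i * x ^ i
        - x ^ (M - 1) * ∑ i ∈ range M, c i * ((i : ℝ) * x ^ (i - 1)))
        / (∑ i ∈ range M, c i * x ^ i) ^ 2) x := by
    exact hf.div hS hSpos.ne'
  rw [hQ.deriv]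
  apply div_pos _ (by positivity)
  rw [Finset.mul_sum, Finset.mul_sum, ← Finset.sum_sub_distrib]
  apply Finset.sum_pos'
  · intro i hi
    rw [Finset.mem_range] at hi
    rcases Nat.eq_zero_or_pos i with h0 | hpos
    · subst h0
      simp
      positivity
    · have hxx : x ^ (M - 2) * x ^ i = x ^ (M - 1) * x ^ (i - 1) := by
        rw [← pow_add, ← pow_add]
        congr 1
        omega
      have hle : (i : ℝ) ≤ ((M - 1 : ℕ) : ℝ) := by
        exact_mod_cast Nat.le_sub_one_of_lt hi
      have : ((M - 1 : ℕ) : ℝ) * x ^ (M - 2) * (c i * x ^ i)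
          - x ^ (M - 1) * (c i * ((i : ℝ) * x ^ (i - 1)))
          = c i * (((M - 1 : ℕ) : ℝ) - i) * (x ^ (M - 1) * x ^ (i - 1)) := by
        linear_combination (c i * ((M - 1 : ℕ) : ℝ)) * hxx
      rw [this]
      have : 0 ≤ ((M - 1 : ℕ) : ℝ) - i := by linarith
      positivity
  · refine ⟨0, Finset.mem_range.2 (by omega), ?_⟩
    simp [hc]
    have h1 : (0 : ℝ) < ((M - 1 : ℕ) : ℝ) := by
      exact_mod_cast Nat.sub_pos_of_lt (by omega)
    positivity
end

section
/- Let N and M be integers with 2 ≤ M < N, and define R(τ) = τ^M (1-τ)^{N-M} / f_1(τ) for τ ∈ (0,1). Then R'(τ) > 0 for every τ ∈ (0,1). -/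
open Finset Set

noncomputable def Spoly (N M : ℕ) (τ : ℝ) : ℝ :=
  ∑ j ∈ range M, ((N-1).choose (M-1-j) : ℝ) * ((1-τ)^j * τ^(M-1-j))

noncomputable def Spoly' (N M : ℕ) (τ : ℝ) : ℝ :=
  ∑ j ∈ range M, ((N-1).choose (M-1-j) : ℝ) *
    (((j:ℝ) * (1-τ)^(j-1) * (-1)) * τ^(M-1-j)
      + (1-τ)^j * (((M-1-j : ℕ):ℝ) * τ^(M-1-j-1)))

lemma hasDerivAt_Spoly (N M : ℕ) (τ : ℝ) :
    HasDerivAt (Spoly N M) (Spoly' N M τ) τ := by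
  unfold Spoly Spoly'
  apply HasDerivAt.fun_sum
  intro j _
  exact ((((hasDerivAt_id τ).const_sub 1).pow j).mul (hasDerivAt_pow (M-1-j) τ)).const_mul _

lemma f1_eq (N M : ℕ) (hM : 2 ≤ M) (hMN : M < N) (τ : ℝ) :
    f1 N M τ = (1-τ)^(N-M) * Spoly N M τ := by
  unfold f1 Spoly
  rw [Finset.mul_sum, ← Finset.sum_range_reflect]
  apply Finset.sum_congr rfl
  intro j hj
  rw [Finset.mem_range] at hj
  have h1 : N - 1 - (M - 1 - j) = (N - M) + j := by omega
  rw [h1, pow_add]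
  ring

lemma Spoly_pos (N M : ℕ) (hM : 2 ≤ M) (hMN : M < N) (τ : ℝ) (hτ : τ ∈ Ioo (0:ℝ) 1) :
    0 < Spoly N M τ := by
  obtain ⟨hτ0, hτ1⟩ := hτ
  unfold Spoly
  apply Finset.sum_pos'
  · intro j _
    have := pow_nonneg (by linarith : (0:ℝ) ≤ 1 - τ) j
    have := pow_nonneg hτ0.le (M-1-j)
    positivity
  · refine ⟨0, Finset.mem_range.mpr (by omega), ?_⟩
    have hc : 0 < ((N-1).choose (M-1-0) : ℝ) := by
      exact_mod_cast Nat.choose_pos (by omega)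
    have := pow_pos hτ0 (M-1-0)
    positivity

lemma R_eq (N M : ℕ) (hM : 2 ≤ M) (hMN : M < N) (τ : ℝ) (hτ : τ ∈ Ioo (0:ℝ) 1) :
    R N M τ = τ^M / Spoly N M τ := by
  obtain ⟨hτ0, hτ1⟩ := hτ
  have hne : (1-τ)^(N-M) ≠ 0 := pow_ne_zero _ (by linarith)
  unfold R
  rw [f1_eq N M hM hMN τ, mul_comm (τ^M) _, mul_div_mul_left _ _ hne]

lemma pow_pred_mul (k : ℕ) (τ : ℝ) : τ * ((k:ℝ) * τ^(k-1)) = (k:ℝ) * τ^k := by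
  cases k with
  | zero => simp
  | succ n => rw [Nat.add_sub_cancel, pow_succ]; ring

lemma key_s10 (N M : ℕ) (hM : 2 ≤ M) (hMN : M < N) (τ : ℝ) (hτ : τ ∈ Ioo (0:ℝ) 1) :
    0 < (M:ℝ) * Spoly N M τ - τ * Spoly' N M τ := by
  obtain ⟨hτ0, hτ1⟩ := hτ
  have h1τ : (0:ℝ) ≤ 1 - τ := by linarith
  unfold Spoly Spoly'
  rw [Finset.mul_sum, Finset.mul_sum, ← Finset.sum_sub_distrib]
  have heq : ∀ j, j < M →
      (M:ℝ) * (((N-1).choose (M-1-j) : ℝ) * ((1-τ)^j * τ^(M-1-j)))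
        - τ * (((N-1).choose (M-1-j) : ℝ) *
          (((j:ℝ) * (1-τ)^(j-1) * (-1)) * τ^(M-1-j)
            + (1-τ)^j * (((M-1-j : ℕ):ℝ) * τ^(M-1-j-1))))
      = ((N-1).choose (M-1-j) : ℝ) *
          (((M:ℝ) - ((M-1-j : ℕ):ℝ)) * ((1-τ)^j * τ^(M-1-j))
            + (j:ℝ) * ((1-τ)^(j-1) * (τ^(M-1-j) * τ))) := by
    intro j _
    have hk := pow_pred_mul (M-1-j) τ
    linear_combination (-(((N-1).choose (M-1-j) : ℝ) * (1-τ)^j)) * hk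
  apply Finset.sum_pos'
  · intro j hj
    rw [Finset.mem_range] at hj
    rw [heq j hj]
    have hc : (0:ℝ) ≤ ((N-1).choose (M-1-j) : ℝ) := Nat.cast_nonneg _
    have hMk : (0:ℝ) ≤ (M:ℝ) - ((M-1-j : ℕ):ℝ) :=
      sub_nonneg.mpr (Nat.cast_le.mpr (by omega))
    apply mul_nonneg hc
    apply add_nonneg
    · exact mul_nonneg hMk (mul_nonneg (pow_nonneg h1τ _) (pow_nonneg hτ0.le _))
    · exact mul_nonneg (Nat.cast_nonneg _)
        (mul_nonneg (pow_nonneg h1τ _) (mul_nonneg (pow_nonneg hτ0.le _) hτ0.le))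
  · refine ⟨0, Finset.mem_range.mpr (by omega), ?_⟩
    rw [heq 0 (by omega)]
    have hc : (0:ℝ) < ((N-1).choose (M-1-0) : ℝ) := by
      exact_mod_cast Nat.choose_pos (by omega)
    have hM1 : ((M-1-0 : ℕ):ℝ) = (M:ℝ) - 1 := by
      have h : M - 1 - 0 = M - 1 := rfl
      rw [h, Nat.cast_sub (by omega : 1 ≤ M)]; norm_num
    rw [hM1]
    have h2 : (M:ℝ) - ((M:ℝ) - 1) = 1 := by ring
    rw [h2]
    have hp := pow_pos hτ0 (M-1-0)
    have hz : ((0:ℕ):ℝ) = 0 := by norm_num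
    simp only [Nat.cast_zero, pow_zero, one_mul, zero_mul, add_zero, mul_zero]
    positivity

theorem stmt10 (N M : ℕ) (hM : 2 ≤ M) (hMN : M < N) :
    ∀ τ ∈ Ioo (0:ℝ) 1, 0 < deriv (R N M) τ := by
  intro τ hτ
  have hS := hasDerivAt_Spoly N M τ
  have hSpos := Spoly_pos N M hM hMN τ hτ
  have hEq : R N M =ᶠ[nhds τ] fun x => x^M / Spoly N M x := by
    filter_upwards [isOpen_Ioo.mem_nhds hτ] with x hx using R_eq N M hM hMN x hx
  rw [hEq.deriv_eq]
  have hd : HasDerivAt (fun x : ℝ => x^M / Spoly N M x)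
      (((M:ℝ) * τ^(M-1) * Spoly N M τ - τ^M * Spoly' N M τ) / (Spoly N M τ)^2) τ :=
    (hasDerivAt_pow M τ).div hS (ne_of_gt hSpos)
  rw [hd.deriv]
  apply div_pos ?_ (pow_pos hSpos 2)
  have hτM : τ^M = τ^(M-1) * τ := by
    rw [← pow_succ]; congr 1; omega
  have hre : (M:ℝ) * τ^(M-1) * Spoly N M τ - τ^M * Spoly' N M τ
      = τ^(M-1) * ((M:ℝ) * Spoly N M τ - τ * Spoly' N M τ) := by
    rw [hτM]; ring
  rw [hre]
  exact mul_pos (pow_pos hτ.1 (M-1)) (key_s10 N M hM hMN τ hτ)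
end

section
/- Let N ≥ 2 and D ≥ 1 be integers. For every τ ∈ (0,1), the derivative of H_2 satisfies H_2'(τ) > N-1. -/
open Set

noncomputable def H2 (N D : ℕ) (τ : ℝ) : ℝ :=
  τ * ((N:ℝ) + (D:ℝ) - 1 - (D:ℝ) / (1 - (1-τ)^D))

theorem stmt11 (N D : ℕ) (hN : 2 ≤ N) (hD : 1 ≤ D) :
    ∀ τ ∈ Ioo (0:ℝ) 1, (N:ℝ) - 1 < deriv (H2 N D) τ := by
  intro τ hτ
  obtain ⟨hτ0, hτ1⟩ := hτ
  set u : ℝ := 1 - τ with hu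
  have hu0 : 0 < u := by simp only [hu]; linarith
  have hu1 : u < 1 := by simp only [hu]; linarith
  have hs0 : 0 < 1 - u ^ D := by
    have := pow_lt_one₀ hu0.le hu1 (by omega : D ≠ 0)
    linarith
  set s : ℝ := 1 - u ^ D with hsdef
  -- derivative of the denominator
  have hd1 : HasDerivAt (fun t : ℝ => 1 - (1 - t) ^ D) ((D : ℝ) * u ^ (D - 1)) τ := by
    have h := (((hasDerivAt_id τ).const_sub 1).fun_pow D).const_sub 1
    refine h.congr_deriv ?_
    simp only [id_eq]
    ring
  have hdiv : HasDerivAt (fun t : ℝ => (D : ℝ) / (1 - (1 - t) ^ D))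
      ((0 * s - (D : ℝ) * ((D : ℝ) * u ^ (D - 1))) / s ^ 2) τ := by
    have := (hasDerivAt_const τ (D : ℝ)).fun_div hd1 (by simpa [hsdef] using hs0.ne')
    simpa [hsdef, hu] using this
  have hbr : HasDerivAt (fun t : ℝ => (N : ℝ) + (D : ℝ) - 1 - (D : ℝ) / (1 - (1 - t) ^ D))
      (0 - (0 * s - (D : ℝ) * ((D : ℝ) * u ^ (D - 1))) / s ^ 2) τ :=
    (hasDerivAt_const τ _).sub hdiv
  have hH : HasDerivAt (H2 N D)
      (1 * ((N : ℝ) + (D : ℝ) - 1 - (D : ℝ) / s) +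
        τ * (0 - (0 * s - (D : ℝ) * ((D : ℝ) * u ^ (D - 1))) / s ^ 2)) τ := by
    have := (hasDerivAt_id τ).fun_mul hbr
    unfold H2
    simpa [H2, hsdef, hu] using this
  rw [hH.deriv]
  -- key inequality
  have huD1 : 0 < u ^ (D - 1) := pow_pos hu0 _
  have hber : 1 + (D : ℝ) * (u - 1) ≤ u ^ D := by
    have := one_add_mul_le_pow (a := u - 1) (by linarith) D
    simpa using this
  have key2 : s * u < (1 - u) * (D : ℝ) := by
    have h1 : s * u < s := by
      have := mul_lt_of_lt_one_right hs0 hu1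
      simpa using this
    have h2 : s ≤ (1 - u) * (D : ℝ) := by
      simp only [hsdef]; nlinarith
    linarith
  have key3 : s * u ^ D < τ * ((D : ℝ) * u ^ (D - 1)) := by
    have hDe : u ^ D = u * u ^ (D - 1) := by
      conv_lhs => rw [show D = 1 + (D - 1) by omega]
      rw [pow_add, pow_one]
    have h5 := mul_lt_mul_of_pos_right key2 huD1
    have hτu : τ = 1 - u := by simp [hu]
    calc s * u ^ D = s * u * u ^ (D - 1) := by rw [hDe]; ring
      _ < (1 - u) * (D : ℝ) * u ^ (D - 1) := h5
      _ = τ * ((D : ℝ) * u ^ (D - 1)) := by rw [hτu]; ring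
  have hs2 : (0 : ℝ) < s ^ 2 := by positivity
  have hEq : 1 * ((N : ℝ) + (D : ℝ) - 1 - (D : ℝ) / s) +
        τ * (0 - (0 * s - (D : ℝ) * ((D : ℝ) * u ^ (D - 1))) / s ^ 2) - ((N : ℝ) - 1)
      = ((D : ℝ) * (τ * ((D : ℝ) * u ^ (D - 1)) - s * u ^ D)) / s ^ 2 := by
    field_simp
    ring
  have hpos : 0 < ((D : ℝ) * (τ * ((D : ℝ) * u ^ (D - 1)) - s * u ^ D)) / s ^ 2 := by
    apply div_pos _ hs2
    have hD0 : (0 : ℝ) < D := by exact_mod_cast hD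
    nlinarith
  linarith [hEq, hpos]
end

section
/- Let N ≥ 2 and D ≥ 1 be integers and let M = 1. Then the unique maximizer of P_D on [0,1] is τ = 1 - ((N-1)/(N-1+D))^{1/D}. -/
open Finset Set

lemma P_eq (N D : ℕ) (τ : ℝ) :
    P N 1 D τ = (1-τ)^(N-1) - (1-τ)^(N-1+D) := by
  simp [P, pow_add]; ring

lemma key_s14 (a D : ℕ) (ha : 1 ≤ a) (hD : 1 ≤ D) :
    ((a:ℝ)/((a:ℝ)+(D:ℝ))) ^ ((1:ℝ)/(D:ℝ)) ∈ Ioo (0:ℝ) 1 ∧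
    ∀ x ∈ Icc (0:ℝ) 1, x ≠ ((a:ℝ)/((a:ℝ)+(D:ℝ))) ^ ((1:ℝ)/(D:ℝ)) →
      x^a - x^(a+D) <
        (((a:ℝ)/((a:ℝ)+(D:ℝ))) ^ ((1:ℝ)/(D:ℝ)))^a
          - (((a:ℝ)/((a:ℝ)+(D:ℝ))) ^ ((1:ℝ)/(D:ℝ)))^(a+D) := by
  have haR : (1:ℝ) ≤ (a:ℝ) := by exact_mod_cast ha
  have hDR : (1:ℝ) ≤ (D:ℝ) := by exact_mod_cast hD
  set r : ℝ := (a:ℝ)/((a:ℝ)+(D:ℝ)) with hr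
  have hden : (0:ℝ) < (a:ℝ)+(D:ℝ) := by linarith
  have hr0 : 0 < r := div_pos (by linarith) hden
  have hr1 : r < 1 := (div_lt_one hden).mpr (by linarith)
  set c : ℝ := r ^ ((1:ℝ)/(D:ℝ)) with hc
  have hc0 : 0 < c := Real.rpow_pos_of_pos hr0 _
  have hc1 : c < 1 := by
    apply Real.rpow_lt_one hr0.le hr1
    positivity
  have hcD : c ^ D = r := by
    rw [hc, ← Real.rpow_natCast (r ^ ((1:ℝ)/(D:ℝ))) D, ← Real.rpow_mul hr0.le]
    rw [one_div, inv_mul_cancel₀ (by positivity), Real.rpow_one]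
  refine ⟨⟨hc0, hc1⟩, ?_⟩
  -- derivative analysis
  set g : ℝ → ℝ := fun x => x^a - x^(a+D) with hg
  have hderiv : ∀ x : ℝ, deriv g x = (a:ℝ)*x^(a-1) - ((a:ℝ)+(D:ℝ))*x^(a-1)*x^D := by
    intro x
    have : deriv g x = (a:ℝ)*x^(a-1) - ((a+D:ℕ):ℝ)*x^(a+D-1) := by
      simp [hg, deriv_fun_sub ((differentiable_pow (𝕜 := ℝ) (𝔸 := ℝ) a).differentiableAt (x := x))
        ((differentiable_pow (𝕜 := ℝ) (𝔸 := ℝ) (a+D)).differentiableAt (x := x))]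
    rw [this]
    have h1 : a + D - 1 = (a-1) + D := by omega
    rw [h1, pow_add]
    push_cast
    ring
  have hcont : Continuous g := by
    fun_prop
  have hmono : StrictMonoOn g (Icc 0 c) := by
    apply strictMonoOn_of_deriv_pos (convex_Icc 0 c) (hcont.continuousOn)
    intro x hx
    rw [interior_Icc] at hx
    rw [hderiv]
    have hx0 : 0 < x := hx.1
    have hxD : x^D < c^D := pow_lt_pow_left₀ hx.2 hx0.le (by omega)
    rw [hcD] at hxD
    have h2 : ((a:ℝ)+(D:ℝ)) * x^D < (a:ℝ) := by
      have := (mul_lt_mul_iff_right₀ hden).mpr hxD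
      rwa [hr, mul_div_cancel₀ _ (ne_of_gt hden)] at this
    have hxp : 0 < x^(a-1) := pow_pos hx0 _
    nlinarith
  have hanti : StrictAntiOn g (Icc c 1) := by
    apply strictAntiOn_of_deriv_neg (convex_Icc c 1) (hcont.continuousOn)
    intro x hx
    rw [interior_Icc] at hx
    rw [hderiv]
    have hx0 : 0 < x := lt_trans hc0 hx.1
    have hxD : c^D < x^D := pow_lt_pow_left₀ hx.1 hc0.le (by omega)
    rw [hcD] at hxD
    have h2 : (a:ℝ) < ((a:ℝ)+(D:ℝ)) * x^D := by
      have := (mul_lt_mul_iff_right₀ hden).mpr hxD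
      rwa [hr, mul_div_cancel₀ _ (ne_of_gt hden)] at this
    have hxp : 0 < x^(a-1) := pow_pos hx0 _
    nlinarith
  intro x hx hne
  rcases lt_or_gt_of_ne hne with h | h
  · exact hmono ⟨hx.1, h.le⟩ ⟨hc0.le, le_refl c⟩ h
  · exact hanti ⟨le_refl c, hc1.le⟩ ⟨h.le, hx.2⟩ h

theorem stmt14 (N D : ℕ) (hN : 2 ≤ N) (hD : 1 ≤ D) :
    (1 - (((N:ℝ)-1)/((N:ℝ)-1+(D:ℝ))) ^ ((1:ℝ)/(D:ℝ))) ∈ Icc (0:ℝ) 1 ∧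
    ∀ τ ∈ Icc (0:ℝ) 1,
      τ ≠ 1 - (((N:ℝ)-1)/((N:ℝ)-1+(D:ℝ))) ^ ((1:ℝ)/(D:ℝ)) →
      P N 1 D τ < P N 1 D (1 - (((N:ℝ)-1)/((N:ℝ)-1+(D:ℝ))) ^ ((1:ℝ)/(D:ℝ))) := by
  have ha : 1 ≤ N - 1 := by omega
  have hcast : ((N-1 : ℕ) : ℝ) = (N:ℝ) - 1 := by
    push_cast [Nat.cast_sub (by omega : 1 ≤ N)]; ring
  obtain ⟨hmem, hkey⟩ := key_s14 (N-1) D ha hD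
  rw [hcast] at hmem hkey
  set c : ℝ := (((N:ℝ)-1)/((N:ℝ)-1+(D:ℝ))) ^ ((1:ℝ)/(D:ℝ)) with hc
  refine ⟨⟨by linarith [hmem.2], by linarith [hmem.1]⟩, ?_⟩
  intro τ hτ hne
  rw [P_eq, P_eq]
  have h1c : 1 - (1 - c) = c := by ring
  rw [show (1 - (1 - c)) = c by ring]
  apply hkey (1 - τ) ⟨by linarith [hτ.2], by linarith [hτ.1]⟩
  intro h
  apply hne
  linarith [h]
end

section
/- Let N, M, D be integers with 2 ≤ M < N and D ≥ 1. Then the unique maximizer τ* of P_D on [0,1] lies in the open interval (1-((N-1)/(N-1+D))^{1/D}, 1). -/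
open Finset Set


lemma term_deriv (n i : ℕ) (τ : ℝ) :
    HasDerivAt (fun x : ℝ => (n.choose i : ℝ) * x^i * (1-x)^(n-i))
      ((n.choose i : ℝ) * ((i : ℝ) * τ^(i-1) * (1-τ)^(n-i)
        - ((n-i : ℕ) : ℝ) * τ^i * (1-τ)^(n-i-1))) τ := by
  have h1 : HasDerivAt (fun x : ℝ => (n.choose i : ℝ) * x^i)
      ((n.choose i : ℝ) * ((i:ℝ) * τ^(i-1))) τ := (hasDerivAt_pow i τ).const_mul _
  have h2 : HasDerivAt (fun x : ℝ => (1-x)^(n-i))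
      ((((n-i : ℕ)) : ℝ) * (1-τ)^(n-i-1) * (-1)) τ := by
    have := ((hasDerivAt_id τ).const_sub (1:ℝ)).pow (n-i)
    simpa [Pi.pow_def] using this
  have := h1.mul h2
  exact this.congr_deriv (by ring)

lemma S_deriv (n m : ℕ) (hm1 : 1 ≤ m) (hmn : m ≤ n) (τ : ℝ) :
    HasDerivAt (fun x : ℝ => ∑ i ∈ range m, (n.choose i : ℝ) * x^i * (1-x)^(n-i))
      (-((n:ℝ) * ((n-1).choose (m-1) : ℝ) * τ^(m-1) * (1-τ)^(n-m))) τ := by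
  induction m, hm1 using Nat.le_induction with
  | base =>
    have h2 : HasDerivAt (fun x : ℝ => (1-x)^n)
        (((n : ℕ) : ℝ) * (1-τ)^(n-1) * (-1)) τ := by
      have := ((hasDerivAt_id τ).const_sub (1:ℝ)).pow n
      simpa [Pi.pow_def] using this
    have : HasDerivAt (fun x : ℝ => ∑ i ∈ range 1, (n.choose i : ℝ) * x^i * (1-x)^(n-i))
        (((n : ℕ) : ℝ) * (1-τ)^(n-1) * (-1)) τ := by
      convert h2 using 2 with x
      simp
    convert this using 1
    simp
  | succ m hm ih =>
    have hmn' : m ≤ n := by omega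
    have ihm := ih hmn'
    have ht := term_deriv n m τ
    have hsum := ihm.add ht
    have : HasDerivAt (fun x : ℝ => ∑ i ∈ range (m+1), (n.choose i : ℝ) * x^i * (1-x)^(n-i))
        (-((n:ℝ) * ((n-1).choose (m-1) : ℝ) * τ^(m-1) * (1-τ)^(n-m))
          + (n.choose m : ℝ) * ((m : ℝ) * τ^(m-1) * (1-τ)^(n-m)
            - ((n-m : ℕ) : ℝ) * τ^m * (1-τ)^(n-m-1))) τ := by
      refine hsum.congr_of_eventuallyEq (Filter.Eventually.of_forall fun x => ?_)
      simp only [Finset.sum_range_succ, Pi.add_apply]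
    convert this using 1
    have e1 : ((n.choose m : ℕ) : ℝ) * (m : ℝ) = (n:ℝ) * ((n-1).choose (m-1) : ℝ) := by
      have := Nat.add_one_mul_choose_eq (n-1) (m-1)
      have hn : n - 1 + 1 = n := by omega
      have hm' : m - 1 + 1 = m := by omega
      rw [hn, hm'] at this
      exact_mod_cast (by exact_mod_cast congrArg (Nat.cast (R := ℝ)) this.symm)
    have e2 : ((n.choose m : ℕ) : ℝ) * ((n-m : ℕ) : ℝ) = (n:ℝ) * ((n-1).choose m : ℝ) := by
      have := Nat.choose_mul_succ_eq (n-1) m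
      have hn : n - 1 + 1 = n := by omega
      rw [hn] at this
      have : ((n.choose m * (n - m) : ℕ) : ℝ) = (((n-1).choose m * n : ℕ) : ℝ) := by
        exact_mod_cast congrArg (Nat.cast (R := ℝ)) this.symm
      push_cast at this
      linarith [this]
    have hexp : n - (m+1) = n - m - 1 := by omega
    have hm1' : (m+1) - 1 = m := by omega
    rw [hexp, hm1']
    linear_combination (τ^m * (1-τ)^(n-m-1)) * e2 - (τ^(m-1) * (1-τ)^(n-m)) * e1

lemma P_deriv (N M D : ℕ) (hM1 : 1 ≤ M) (hMN : M ≤ N - 1) (hD : 1 ≤ D) (τ : ℝ) :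
    HasDerivAt (P N M D)
      ((D:ℝ) * (1-τ)^(D-1) * (∑ i ∈ range M, ((N-1).choose i : ℝ) * τ^i * (1-τ)^(N-1-i))
        - (1 - (1-τ)^D) * (((N-1:ℕ)):ℝ) * (((N-1-1).choose (M-1)):ℝ) * τ^(M-1) * (1-τ)^(N-1-M)) τ := by
  have hf : HasDerivAt (fun x : ℝ => 1 - (1-x)^D) ((D:ℝ) * (1-τ)^(D-1)) τ := by
    have := (((hasDerivAt_id τ).const_sub (1:ℝ)).pow D).const_sub (1:ℝ)
    simpa using this
  have hs := S_deriv (N-1) M hM1 hMN τ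
  have := hf.mul hs
  exact this.congr_deriv (by ring)

set_option maxHeartbeats 1000000 in
theorem stmt15 (N M D : ℕ) (hM : 2 ≤ M) (hMN : M < N) (hD : 1 ≤ D) :
    ∀ τs ∈ Icc (0:ℝ) 1, (∀ τ ∈ Icc (0:ℝ) 1, P N M D τ ≤ P N M D τs) →
      τs ∈ Ioo (1 - (((N:ℝ)-1)/((N:ℝ)-1+(D:ℝ))) ^ ((1:ℝ)/(D:ℝ))) 1 := by
  intro τs hτs hmax
  have hN3 : 3 ≤ N := by omega
  have hMn : M ≤ N - 1 := by omega
  have hcast : ((N:ℝ) - 1) = ((N-1:ℕ):ℝ) := by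
    have h1 : (1:ℕ) ≤ N := by omega
    push_cast [Nat.cast_sub h1]
    ring
  rw [hcast]
  have hnR : (2:ℝ) ≤ ((N-1:ℕ):ℝ) := by exact_mod_cast (by omega : 2 ≤ N - 1)
  have hDR : (1:ℝ) ≤ (D:ℝ) := by exact_mod_cast hD
  set b : ℝ := ((N-1:ℕ):ℝ)/(((N-1:ℕ):ℝ)+(D:ℝ)) with hb
  have hnD : (0:ℝ) < ((N-1:ℕ):ℝ) + D := by linarith
  have hb0 : 0 < b := by rw [hb]; positivity
  have hb1 : b < 1 := by rw [hb, div_lt_one hnD]; linarith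
  set r : ℝ := b ^ ((1:ℝ)/(D:ℝ)) with hr
  have hr0 : 0 < r := Real.rpow_pos_of_pos hb0 _
  have hr1 : r < 1 := Real.rpow_lt_one hb0.le hb1 (by positivity)
  have hrD : r ^ D = b := by
    rw [hr, ← Real.rpow_natCast (b ^ ((1:ℝ)/(D:ℝ))) D, ← Real.rpow_mul hb0.le]
    rw [one_div_mul_cancel (by exact_mod_cast (by omega : D ≠ 0) : (D:ℝ) ≠ 0), Real.rpow_one]
  have hrn : 1 - 1/((N-1:ℕ):ℝ) ≤ r := by
    have h1 : (0:ℝ) ≤ 1 - 1/((N-1:ℕ):ℝ) := by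
      have : 1/((N-1:ℕ):ℝ) ≤ 1/2 := by
        apply one_div_le_one_div_of_le <;> linarith
      linarith
    have hstep : (1 - 1/((N-1:ℕ):ℝ))^D ≤ r^D := by
      rw [hrD, hb]
      have hBer : 1 + (D:ℝ) * (1/((N-1:ℕ):ℝ)) ≤ (1 + 1/((N-1:ℕ):ℝ))^D := by
        have := one_add_mul_le_pow (a := 1/((N-1:ℕ):ℝ))
          (le_trans (by norm_num : (-2:ℝ) ≤ 0) (by positivity)) D
        linarith [this]
      have h2 : (1 - 1/((N-1:ℕ):ℝ)) ≤ 1/(1 + 1/((N-1:ℕ):ℝ)) := by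
        rw [le_div_iff₀ (by positivity)]
        have : 1/((N-1:ℕ):ℝ)*(1/((N-1:ℕ):ℝ)) ≥ 0 := by positivity
        nlinarith
      calc (1 - 1/((N-1:ℕ):ℝ))^D ≤ (1/(1 + 1/((N-1:ℕ):ℝ)))^D := by
            apply pow_le_pow_left₀ h1 h2
        _ = 1/(1 + 1/((N-1:ℕ):ℝ))^D := by rw [div_pow, one_pow]
        _ ≤ 1/(1 + (D:ℝ) * (1/((N-1:ℕ):ℝ))) := by
            apply one_div_le_one_div_of_le (by positivity) hBer
        _ = ((N-1:ℕ):ℝ)/(((N-1:ℕ):ℝ)+D) := by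
            have hx : (0:ℝ) < ((N-1:ℕ):ℝ) := by linarith
            rw [div_eq_div_iff (by positivity) (ne_of_gt hnD), one_mul, mul_add, mul_one,
              mul_one_div, mul_comm ((N-1:ℕ):ℝ) ((D:ℝ)/((N-1:ℕ):ℝ)),
              div_mul_cancel₀ _ (ne_of_gt hx)]
    exact le_of_pow_le_pow_left₀ (by omega) hr0.le hstep
  have hP0 : P N M D 0 = 0 := by simp [P]
  have hP1 : P N M D 1 = 0 := by
    rw [P]
    have : ∑ i ∈ range M, ((N-1).choose i : ℝ) * (1:ℝ)^i * (1-1)^(N-1-i) = 0 := by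
      apply Finset.sum_eq_zero
      intro i hi
      have : N - 1 - i ≠ 0 := by
        simp only [Finset.mem_range] at hi; omega
      simp [zero_pow this]
    rw [this, mul_zero]
  have hPhalf : 0 < P N M D (1/2) := by
    rw [P]
    apply mul_pos
    · have : ((1:ℝ) - 1/2)^D < 1 := by
        apply pow_lt_one₀ (by norm_num) (by norm_num) (by omega)
      linarith
    · apply Finset.sum_pos'
      · intro i hi; positivity
      · refine ⟨0, Finset.mem_range.mpr (by omega), ?_⟩
        have : (0:ℕ) < (N-1).choose 0 := Nat.choose_pos (by omega)
        positivity
  have hτs1 : τs < 1 := by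
    rcases lt_or_eq_of_le hτs.2 with h | h
    · exact h
    · exfalso
      have := hmax (1/2) (by constructor <;> norm_num)
      rw [h, hP1] at this
      linarith
  have hτs0 : 0 < τs := by
    rcases lt_or_eq_of_le hτs.1 with h | h
    · exact h
    · exfalso
      have := hmax (1/2) (by constructor <;> norm_num)
      rw [← h, hP0] at this
      linarith
  refine ⟨?_, hτs1⟩
  by_contra hcon
  push_neg at hcon
  have hτr : r ≤ 1 - τs := by linarith
  have h1τ : 0 < 1 - τs := by linarith
  have hτn : τs ≤ 1/((N-1:ℕ):ℝ) := by
    have : 1 - 1/((N-1:ℕ):ℝ) ≤ 1 - τs := by linarith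
    linarith
  have hloc : IsLocalMax (P N M D) τs := by
    apply Filter.eventually_of_mem (Icc_mem_nhds hτs0 hτs1)
    intro x hx
    exact hmax x hx
  have hder := P_deriv N M D (by omega) hMn hD τs
  have hzero := hloc.hasDerivAt_eq_zero hder
  set S : ℝ := ∑ i ∈ range M, ((N-1).choose i : ℝ) * τs^i * (1-τs)^(N-1-i) with hS
  clear_value S
  have hpos : 0 < (D:ℝ) * (1-τs)^(D-1) * S - (1 - (1-τs)^D) * ((N-1:ℕ):ℝ) * (((N-1-1).choose (M-1)):ℝ) * τs^(M-1) * (1-τs)^(N-1-M) := by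
    have hpowD : b ≤ (1-τs)^D := by
      rw [← hrD]; exact pow_le_pow_left₀ hr0.le hτr D
    have hKey : (((N-1-1).choose (M-1)):ℝ) * τs^(M-1) * (1-τs)^(N-1-M) < S := by
      have hsub : ({M-2, M-1} : Finset ℕ) ⊆ range M := by
        intro x hx
        simp only [Finset.mem_insert, Finset.mem_singleton] at hx
        rcases hx with h | h <;> (rw [h]; exact Finset.mem_range.mpr (by omega))
      have hpair : ∑ i ∈ ({M-2,M-1} : Finset ℕ), ((N-1).choose i:ℝ) * τs^i * (1-τs)^(N-1-i) ≤ S := by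
        rw [hS]
        apply Finset.sum_le_sum_of_subset_of_nonneg hsub
        intro i _ _; positivity
      rw [Finset.sum_pair (by omega : M-2 ≠ M-1)] at hpair
      have hT2pos : 0 < ((N-1).choose (M-2):ℝ) * τs^(M-2) * (1-τs)^(N-1-(M-2)) := by
        have h0 : 0 < (N-1).choose (M-2) := Nat.choose_pos (by omega)
        positivity
      have hnpos : (0:ℝ) < ((N-1:ℕ):ℝ) := by linarith
      have hch0 : (0:ℝ) ≤ (((N-1).choose (M-1)):ℝ) := by positivity
      have hco : (((N-1-1).choose (M-1)):ℝ) ≤ (((N-1).choose (M-1)):ℝ) * (1-τs) := by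
        have hid := Nat.choose_mul_succ_eq (N-1-1) (M-1)
        rw [(by omega : N - 1 - 1 + 1 = N - 1)] at hid
        have hidR : (((N-1-1).choose (M-1)):ℝ) * ((N-1:ℕ):ℝ)
            = (((N-1).choose (M-1)):ℝ) * ((N - 1 - (M-1) : ℕ):ℝ) := by
          exact_mod_cast congrArg (Nat.cast (R := ℝ)) hid
        have hle : ((N - 1 - (M-1) : ℕ):ℝ) ≤ ((N-1:ℕ):ℝ) - 1 := by
          have h1 : ((N - 1 - (M-1) : ℕ):ℝ) ≤ ((N - 1 - 1 : ℕ):ℝ) := by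
            exact_mod_cast Nat.cast_le.mpr (by omega : N - 1 - (M-1) ≤ N - 1 - 1)
          have h2 : ((N - 1 - 1 : ℕ):ℝ) = ((N-1:ℕ):ℝ) - 1 := by
            have h3 : ((N - 1 - 1 : ℕ):ℝ) + 1 = ((N-1:ℕ):ℝ) := by
              exact_mod_cast congrArg (Nat.cast (R := ℝ)) (by omega : N - 1 - 1 + 1 = N - 1)
            linarith
          linarith
        have hτ'' : ((N-1:ℕ):ℝ) - 1 ≤ (1-τs)*((N-1:ℕ):ℝ) := by
          have hτmul : τs * ((N-1:ℕ):ℝ) ≤ 1 := by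
            have := mul_le_mul_of_nonneg_right hτn hnpos.le
            rw [one_div, inv_mul_cancel₀ (ne_of_gt hnpos)] at this
            linarith
          nlinarith
        have k1 : (((N-1).choose (M-1)):ℝ) * ((N - 1 - (M-1) : ℕ):ℝ)
            ≤ (((N-1).choose (M-1)):ℝ) * (((N-1:ℕ):ℝ) - 1) := mul_le_mul_of_nonneg_left hle hch0
        have k2 : (((N-1).choose (M-1)):ℝ) * (((N-1:ℕ):ℝ) - 1)
            ≤ (((N-1).choose (M-1)):ℝ) * ((1-τs)*((N-1:ℕ):ℝ)) := mul_le_mul_of_nonneg_left hτ'' hch0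
        have hfin : (((N-1-1).choose (M-1)):ℝ) * ((N-1:ℕ):ℝ)
            ≤ ((((N-1).choose (M-1)):ℝ) * (1-τs)) * ((N-1:ℕ):ℝ) := by
          calc (((N-1-1).choose (M-1)):ℝ) * ((N-1:ℕ):ℝ)
              = (((N-1).choose (M-1)):ℝ) * ((N - 1 - (M-1) : ℕ):ℝ) := hidR
            _ ≤ (((N-1).choose (M-1)):ℝ) * ((1-τs)*((N-1:ℕ):ℝ)) := le_trans k1 k2
            _ = ((((N-1).choose (M-1)):ℝ) * (1-τs)) * ((N-1:ℕ):ℝ) := by ring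
        exact le_of_mul_le_mul_right hfin hnpos
      have hexp : N-1-(M-1) = (N-1-M)+1 := by omega
      have ht1 : (((N-1-1).choose (M-1)):ℝ) * τs^(M-1) * (1-τs)^(N-1-M)
          ≤ (((N-1).choose (M-1)):ℝ) * τs^(M-1) * (1-τs)^(N-1-(M-1)) := by
        rw [hexp, pow_succ]
        have hnn : (0:ℝ) ≤ τs^(M-1) * (1-τs)^(N-1-M) := by positivity
        calc (((N-1-1).choose (M-1)):ℝ) * τs^(M-1) * (1-τs)^(N-1-M)
            = (((N-1-1).choose (M-1)):ℝ) * (τs^(M-1) * (1-τs)^(N-1-M)) := by ring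
          _ ≤ ((((N-1).choose (M-1)):ℝ) * (1-τs)) * (τs^(M-1) * (1-τs)^(N-1-M)) :=
              mul_le_mul_of_nonneg_right hco hnn
          _ = (((N-1).choose (M-1)):ℝ) * τs^(M-1) * ((1-τs)^(N-1-M) * (1-τs)) := by ring
      linarith
    have hmul : ((N-1:ℕ):ℝ) ≤ (1-τs)^D * (((N-1:ℕ):ℝ)+D) := by
      rw [hb, div_le_iff₀ hnD] at hpowD
      linarith
    have hA2 : (1 - (1-τs)^D) * (((N-1:ℕ):ℝ) + D) ≤ (D:ℝ) := by nlinarith [hmul]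
    have hpow1 : (1-τs)^D ≤ (1-τs)^(D-1) := by
      apply pow_le_pow_of_le_one h1τ.le (by linarith) (by omega)
    have hB2 : (D:ℝ) * ((N-1:ℕ):ℝ) ≤ (D:ℝ) * (1-τs)^(D-1) * (((N-1:ℕ):ℝ)+D) := by
      nlinarith [hmul, mul_le_mul_of_nonneg_right hpow1 hnD.le, hDR]
    have hc0 : 0 ≤ (((N-1-1).choose (M-1)):ℝ) * τs^(M-1) * (1-τs)^(N-1-M) := by positivity
    have hS0 : 0 ≤ S := le_of_lt (lt_of_le_of_lt hc0 hKey)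
    have hdx : 0 < (D:ℝ) * ((N-1:ℕ):ℝ) := by nlinarith
    have hx0 : (0:ℝ) ≤ ((N-1:ℕ):ℝ) := by linarith
    have h1 : ((1 - (1-τs)^D) * ((N-1:ℕ):ℝ) * ((((N-1-1).choose (M-1)):ℝ) * τs^(M-1) * (1-τs)^(N-1-M))) * (((N-1:ℕ):ℝ)+D)
        ≤ (D:ℝ) * ((N-1:ℕ):ℝ) * ((((N-1-1).choose (M-1)):ℝ) * τs^(M-1) * (1-τs)^(N-1-M)) := by
      nlinarith [mul_le_mul_of_nonneg_right hA2 (mul_nonneg hx0 hc0)]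
    have h2 : (D:ℝ) * ((N-1:ℕ):ℝ) * ((((N-1-1).choose (M-1)):ℝ) * τs^(M-1) * (1-τs)^(N-1-M))
        < (D:ℝ) * ((N-1:ℕ):ℝ) * S := mul_lt_mul_of_pos_left hKey hdx
    have h3 : (D:ℝ) * ((N-1:ℕ):ℝ) * S ≤ (D:ℝ) * (1-τs)^(D-1) * (((N-1:ℕ):ℝ)+D) * S :=
      mul_le_mul_of_nonneg_right hB2 hS0
    have hchain : ((1 - (1-τs)^D) * ((N-1:ℕ):ℝ) * ((((N-1-1).choose (M-1)):ℝ) * τs^(M-1) * (1-τs)^(N-1-M))) * (((N-1:ℕ):ℝ)+D)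
        < ((D:ℝ) * (1-τs)^(D-1) * S) * (((N-1:ℕ):ℝ)+D) := by nlinarith [h1, h2, h3]
    have hfin := (mul_lt_mul_iff_of_pos_right hnD).mp hchain
    nlinarith [hfin]
  rw [hzero] at hpos
  exact lt_irrefl 0 hpos
end
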